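/- Any piecewise affine function f: ℝⁿ → ℝᵐ, i.e., a continuous function for which there exists a finite family of affine functions f_k(x) = A_k x + b_k, k = 1,…,K, such that for every x, f(x) ∈ {f_1(x),…,f_K(x)}, is globally Lipschitz continuous with Lipschitz constant α = max_k ‖A_k‖, where ‖·‖ is the operator norm induced by any fixed vector norms on ℝⁿ and ℝᵐ. -/
import Mathlib


/-- A continuous piecewise affine function (a continuous `f` such that for every `x`,
`f x = A_k x + b_k` for some member of a finite family of affine pieces) is globally
Lipschitz with constant `max_k ‖A_k‖`, the largest operator norm of the pieces.
(The normed spaces `E`, `F` play the role of `ℝⁿ`, `ℝᵐ` equipped with arbitrary norms.) -/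
theorem piecewiseAffine_lipschitz {E F : Type*}
    [NormedAddCommGroup E] [NormedSpace ℝ E] [FiniteDimensional ℝ E]
    [NormedAddCommGroup F] [NormedSpace ℝ F] [FiniteDimensional ℝ F]
    {K : ℕ} (f : E → F) (hf : Continuous f)
    (A : Fin K → E →L[ℝ] F) (b : Fin K → F)
    (hpa : ∀ x : E, ∃ k : Fin K, f x = A k x + b k) :
    ∀ x y : E, ‖f x - f y‖ ≤ (⨆ k, ‖A k‖) * ‖x - y‖ := by
  classical
  intro x y
  obtain ⟨k0, -⟩ := hpa x
  have hne : Nonempty (Fin K) := ⟨k0⟩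
  set α := ⨆ k, ‖A k‖ with hαdef
  have hαle : ∀ k, ‖A k‖ ≤ α := fun k =>
    le_ciSup (f := fun k => ‖A k‖) (Set.Finite.bddAbove (Set.finite_range _)) k
  have hα0 : 0 ≤ α := le_trans (norm_nonneg _) (hαle k0)
  set C := α * ‖x - y‖ with hCdef
  have hC0 : 0 ≤ C := mul_nonneg hα0 (norm_nonneg _)
  set p : ℝ → E := fun t => y + t • (x - y) with hp
  have hpc : Continuous p := by fun_prop
  have hgc : Continuous fun s => f (p s) := hf.comp hpc
  have hpd : ∀ s t : ℝ, p s - p t = (s - t) • (x - y) := by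
    intro s t
    simp only [hp, sub_smul]
    abel
  -- local Lipschitz estimate
  have key : ∀ t : ℝ, ∃ δ > 0, ∀ s : ℝ, |s - t| < δ →
      ‖f (p s) - f (p t)‖ ≤ C * |s - t| := by
    intro t
    obtain ⟨ε, hε0, hεk⟩ : ∃ ε > 0, ∀ k : Fin K,
        ‖A k (p t) + b k - f (p t)‖ < ε → A k (p t) + b k = f (p t) := by
      set T := Finset.univ.filter (fun k : Fin K => A k (p t) + b k ≠ f (p t)) with hT
      rcases T.eq_empty_or_nonempty with h | h
      · refine ⟨1, one_pos, fun k _ => ?_⟩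
        by_contra hk
        have : k ∈ T := by simp [hT, hk]
        simp [h] at this
      · refine ⟨T.inf' h (fun k => ‖A k (p t) + b k - f (p t)‖), ?_, ?_⟩
        · rw [gt_iff_lt, Finset.lt_inf'_iff]
          intro k hk
          have : A k (p t) + b k ≠ f (p t) := by
            simpa [hT] using hk
          have : A k (p t) + b k - f (p t) ≠ 0 := sub_ne_zero_of_ne this
          exact norm_pos_iff.mpr this
        · intro k hklt
          by_contra hk
          have hkT : k ∈ T := by simp [hT, hk]
          exact absurd hklt (not_lt.mpr (Finset.inf'_le _ hkT))
    obtain ⟨δ1, hδ10, hδ1⟩ := Metric.continuousAt_iff.mp hgc.continuousAt (ε / 2)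
      (by positivity)
    refine ⟨min δ1 (ε / (2 * (C + 1))), lt_min hδ10 (by positivity), fun s hs => ?_⟩
    have hs1 : |s - t| < δ1 := lt_of_lt_of_le hs (min_le_left _ _)
    have hs2 : |s - t| < ε / (2 * (C + 1)) := lt_of_lt_of_le hs (min_le_right _ _)
    obtain ⟨k, hk⟩ := hpa (p s)
    have hnear : ‖f (p s) - f (p t)‖ < ε / 2 := by
      have := hδ1 (show dist s t < δ1 by simpa [Real.dist_eq] using hs1)
      simpa [dist_eq_norm] using this
    have hAd : ‖A k (p t) - A k (p s)‖ ≤ C * |s - t| := by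
      have : A k (p t) - A k (p s) = A k (p t - p s) := ((A k).map_sub _ _).symm
      rw [this, hpd t s]
      calc ‖A k ((t - s) • (x - y))‖ ≤ ‖A k‖ * ‖(t - s) • (x - y)‖ :=
            (A k).le_opNorm _
        _ = ‖A k‖ * (|t - s| * ‖x - y‖) := by rw [norm_smul, Real.norm_eq_abs]
        _ ≤ α * (|t - s| * ‖x - y‖) := by
            apply mul_le_mul_of_nonneg_right (hαle k) (by positivity)
        _ = C * |s - t| := by rw [abs_sub_comm]; ring
    have h1 : ‖A k (p t) + b k - f (p t)‖ < ε := by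
      have hsplit : A k (p t) + b k - f (p t)
          = (A k (p t) - A k (p s)) + (f (p s) - f (p t)) := by
        rw [hk]; abel
      have := norm_add_le (A k (p t) - A k (p s)) (f (p s) - f (p t))
      rw [← hsplit] at this
      have hC2 : C * |s - t| ≤ ε / 2 := by
        have h := mul_le_mul_of_nonneg_left hs2.le hC0
        have : C * (ε / (2 * (C + 1))) ≤ ε / 2 := by
          rw [mul_div_assoc', div_le_div_iff₀ (by positivity) two_pos]
          nlinarith
        linarith
      linarith
    have hact := hεk k h1
    have : f (p s) - f (p t) = A k (p s) - A k (p t) := by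
      rw [hk, ← hact]; abel
    rw [this]
    calc ‖A k (p s) - A k (p t)‖ = ‖A k (p t) - A k (p s)‖ := norm_sub_rev _ _
      _ ≤ C * |s - t| := hAd
  -- global estimate via the fencing theorem
  have main : ∀ ε > 0, ‖f (p 1) - f (p 0)‖ ≤ C + ε := by
    intro ε hε
    have hB' : ∀ r ∈ Set.Ico (0:ℝ) 1,
        HasDerivWithinAt (fun r => (C + ε) * r) (C + ε) (Set.Ici r) r := by
      intro r _
      simpa using ((hasDerivAt_id r).const_mul (C + ε)).hasDerivWithinAt
    have hf' : ∀ t ∈ Set.Ico (0:ℝ) 1, ∀ r, (fun _ => C) t < r →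
        ∃ᶠ z in nhdsWithin t (Set.Ioi t),
          slope (norm ∘ fun u => f (p u) - f (p 0)) t z < r := by
      intro t _ r hr
      obtain ⟨δ, hδ0, hδ⟩ := key t
      apply Filter.Eventually.frequently
      filter_upwards [Ioo_mem_nhdsGT_of_mem
        (show t ∈ Set.Ico t (t + δ) from Set.mem_Ico.mpr ⟨le_refl t, by linarith⟩)]
        with z hz
      have hzt : 0 < z - t := sub_pos.mpr hz.1
      have habs : |z - t| < δ := by
        rw [abs_of_pos hzt]; linarith [hz.2]
      have hest := hδ z habs
      rw [abs_of_pos hzt] at hest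
      have hub : ‖f (p z) - f (p 0)‖ - ‖f (p t) - f (p 0)‖ ≤ C * (z - t) := by
        calc ‖f (p z) - f (p 0)‖ - ‖f (p t) - f (p 0)‖
            ≤ ‖(f (p z) - f (p 0)) - (f (p t) - f (p 0))‖ := norm_sub_norm_le _ _
          _ = ‖f (p z) - f (p t)‖ := by congr 1; abel
          _ ≤ C * (z - t) := hest
      have : slope (norm ∘ fun u => f (p u) - f (p 0)) t z
          = (‖f (p z) - f (p 0)‖ - ‖f (p t) - f (p 0)‖) / (z - t) := by
        simp [slope_def_field, Function.comp]
      rw [this, div_lt_iff₀ hzt]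
      nlinarith
    have := image_norm_le_of_liminf_right_slope_norm_lt_deriv_boundary
      (f := fun u => f (p u) - f (p 0)) (a := 0) (b := 1) (f' := fun _ => C)
      (B := fun r => (C + ε) * r) (B' := fun _ => C + ε)
      ((hgc.sub continuous_const).continuousOn) hf' (by simp)
      (by fun_prop) hB' (fun r _ _ => show C < C + ε by linarith)
    have h1 := this (Set.right_mem_Icc.mpr zero_le_one)
    simpa using h1
  have hp1 : p 1 = x := by simp [hp]
  have hp0 : p 0 = y := by simp [hp]
  have : ‖f x - f y‖ ≤ C := by
    apply le_of_forall_pos_le_add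
    intro ε hε
    have := main ε hε
    rwa [hp1, hp0] at this
  exact this
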